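/- arXiv:2206.00115 — 8 statements merged into one kernel-verified Lean document; each statement's English description precedes it below -/
import Mathlib

section
/- For every natural number p ≥ 1 and every natural number n, F_n - n^p = ∑_{i=1}^{n} ( i^p - 2·∑_{j=0}^{⌊p/2⌋} C(p, 2j+1)·i^{p-2j-1} ) · F_{n-i}, as an identity of integers. -/
open Finset

lemma key (p : ℕ) (x : ℤ) :
    (x+1)^p - (x-1)^p
      = 2 * ∑ j ∈ range (p/2+1), (p.choose (2*j+1) : ℤ) * x^(p-(2*j+1)) := by
  have h1 : (x+1)^p = ∑ k ∈ range (p+1), (p.choose k : ℤ) * x^k := by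
    rw [add_pow]
    exact sum_congr rfl fun k hk => by ring
  have h2 : (x-1)^p = ∑ k ∈ range (p+1), (p.choose k : ℤ) * x^k * (-1)^(p-k) := by
    have h : x - 1 = x + (-1) := by ring
    rw [h, add_pow]
    exact sum_congr rfl fun k hk => by ring
  have hL : (x+1)^p - (x-1)^p
      = ∑ k ∈ (range (p+1)).filter (fun k => Odd (p-k)), 2 * ((p.choose k : ℤ) * x^k) := by
    rw [h1, h2, ← sum_sub_distrib, sum_filter]
    refine sum_congr rfl fun k hk => ?_
    rcases Nat.even_or_odd (p - k) with h | h
    · simp [Nat.not_odd_iff_even.2 h, h.neg_one_pow]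
    · rw [if_pos h, h.neg_one_pow]; ring
  have hR : ∑ j ∈ range (p/2+1), (p.choose (2*j+1) : ℤ) * x^(p-(2*j+1))
      = ∑ j ∈ (range (p/2+1)).filter (fun j => 2*j+1 ≤ p),
          (p.choose (2*j+1) : ℤ) * x^(p-(2*j+1)) := by
    rw [sum_filter]
    refine sum_congr rfl fun j hj => ?_
    rcases le_or_gt (2*j+1) p with h | h
    · rw [if_pos h]
    · rw [if_neg (by omega), Nat.choose_eq_zero_of_lt h]; simp
  rw [hL, hR, ← mul_sum]
  congr 1
  refine sum_nbij' (fun k => (p - k)/2) (fun j => p - (2*j+1)) ?_ ?_ ?_ ?_ ?_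
  · intro k hk
    simp only [mem_filter, mem_range] at hk ⊢
    obtain ⟨hk1, m, hm⟩ := hk
    omega
  · intro j hj
    simp only [mem_filter, mem_range] at hj ⊢
    refine ⟨by omega, ?_⟩
    exact ⟨j, by omega⟩
  · intro k hk
    simp only [mem_filter, mem_range] at hk
    obtain ⟨hk1, m, hm⟩ := hk
    show p - (2 * ((p - k)/2) + 1) = k
    omega
  · intro j hj
    simp only [mem_filter, mem_range] at hj
    show (p - (p - (2*j+1)))/2 = j
    omega
  · intro k hk
    simp only [mem_filter, mem_range] at hk
    obtain ⟨hk1, m, hm⟩ := hk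
    have h1 : 2 * ((p-k)/2) + 1 = p - k := by omega
    have h2 : p - (p - k) = k := by omega
    rw [h1, h2, Nat.choose_symm (by omega)]

lemma aux_main (p : ℕ) (hp : 1 ≤ p) : ∀ n : ℕ,
    (Nat.fib n : ℤ) - (n : ℤ) ^ p =
      ∑ i ∈ Icc 1 n,
        ((i : ℤ)^p - (((i:ℤ)+1)^p - ((i:ℤ)-1)^p)) * (Nat.fib (n - i) : ℤ) := by
  have hg : True := trivial
  let g : ℕ → ℤ := fun i => ((i : ℤ)^p - (((i:ℤ)+1)^p - ((i:ℤ)-1)^p))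
  show ∀ n, (Nat.fib n : ℤ) - (n : ℤ) ^ p = ∑ i ∈ Icc 1 n, g i * (Nat.fib (n - i) : ℤ)
  intro n
  induction n using Nat.twoStepInduction with
  | zero => simp [zero_pow (by omega : p ≠ 0)]
  | one => simp
  | more n ih2 ih1 =>
    have peel2 : ∑ i ∈ Icc 1 (n+2), g i * (Nat.fib (n+2-i) : ℤ)
        = (∑ i ∈ Icc 1 n, g i * (Nat.fib (n+2-i) : ℤ)) + g (n+1) * Nat.fib 1
          + g (n+2) * Nat.fib 0 := by
      rw [Finset.sum_Icc_succ_top (by omega : 1 ≤ n+2),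
          Finset.sum_Icc_succ_top (by omega : 1 ≤ n+1)]
      simp
    have peel1 : ∑ i ∈ Icc 1 (n+1), g i * (Nat.fib (n+1-i) : ℤ)
        = (∑ i ∈ Icc 1 n, g i * (Nat.fib (n+1-i) : ℤ)) + g (n+1) * Nat.fib 0 := by
      rw [Finset.sum_Icc_succ_top (by omega : 1 ≤ n+1)]
      simp
    have hsplit : ∑ i ∈ Icc 1 n, g i * (Nat.fib (n+2-i) : ℤ)
        = (∑ i ∈ Icc 1 n, g i * (Nat.fib (n-i) : ℤ))
          + ∑ i ∈ Icc 1 n, g i * (Nat.fib (n+1-i) : ℤ) := by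
      rw [← sum_add_distrib]
      refine sum_congr rfl fun i hi => ?_
      simp only [mem_Icc] at hi
      have e2 : n + 2 - i = (n - i) + 2 := by omega
      have e1 : n + 1 - i = (n - i) + 1 := by omega
      rw [e2, e1, Nat.fib_add_two]
      push_cast
      ring
    have e1 : (∑ i ∈ Icc 1 n, g i * (Nat.fib (n+1-i) : ℤ))
        = (Nat.fib (n+1) : ℤ) - (((n+1 : ℕ)) : ℤ)^p := by
      calc ∑ i ∈ Icc 1 n, g i * (Nat.fib (n+1-i) : ℤ)
            = ∑ i ∈ Icc 1 (n+1), g i * (Nat.fib (n+1-i) : ℤ) := by rw [peel1]; simp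
        _ = (Nat.fib (n+1) : ℤ) - (((n+1 : ℕ)) : ℤ)^p := ih1.symm
    rw [peel2, hsplit, ← ih2, e1]
    have hfib : (Nat.fib (n+2) : ℤ) = Nat.fib n + Nat.fib (n+1) := by
      rw [Nat.fib_add_two]; push_cast; ring
    rw [hfib]
    show _ = _ + _ + ((((n:ℕ)+1 : ℕ) : ℤ)^p - (((((n:ℕ)+1:ℕ):ℤ)+1)^p - ((((n:ℕ)+1:ℕ):ℤ)-1)^p)) * (Nat.fib 1 : ℤ)
          + ((((n:ℕ)+2 : ℕ) : ℤ)^p - (((((n:ℕ)+2:ℕ):ℤ)+1)^p - ((((n:ℕ)+2:ℕ):ℤ)-1)^p)) * (Nat.fib 0 : ℤ)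
    push_cast
    ring



/-- For every `p ≥ 1` and every `n : ℕ`,
`F_n - n^p = ∑_{i=1}^{n} ( i^p - 2·∑_{j=0}^{⌊p/2⌋} C(p,2j+1)·i^(p-2j-1) ) · F_{n-i}`
as an identity of integers. -/
theorem fib_sub_pow_eq_sum (p : ℕ) (hp : 1 ≤ p) (n : ℕ) :
    (Nat.fib n : ℤ) - (n : ℤ) ^ p =
      ∑ i ∈ Finset.Icc 1 n,
        ((i : ℤ) ^ p - 2 * ∑ j ∈ Finset.range (p / 2 + 1),
            (p.choose (2 * j + 1) : ℤ) * (i : ℤ) ^ (p - (2 * j + 1)))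
          * (Nat.fib (n - i) : ℤ) := by
  rw [aux_main p hp n]
  refine sum_congr rfl fun i hi => ?_
  rw [key p (i : ℤ)]
end

section
/- For every natural number p ≥ 1 and every natural number n, the convolution 𝒞_n^{(p)} satisfies the recursion (-1)^p·F_n - n^p = 𝒞_n^{(p)} - 2·∑_{j=0}^{⌊p/2⌋} C(p, 2j+1)·𝒞_n^{(p-2j-1)}, as an identity of integers. -/
/-- The convolution `𝒞_n^{(p)} = ∑_{i=0}^{n} i^p · F_{n-i}`, with the convention
`0^0 = 1` (which is the convention of `(0 : ℤ) ^ 0` in Lean). -/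
def fibConv (n p : ℕ) : ℤ :=
  ∑ i ∈ Finset.range (n + 1), (i : ℤ) ^ p * (Nat.fib (n - i) : ℤ)

lemma oddSum (h : ℕ → ℤ) (he : ∀ m, Even m → h m = 0) (N : ℕ) :
    ∑ m ∈ Finset.range N, h m = ∑ j ∈ Finset.range (N / 2), h (2 * j + 1) := by
  induction N with
  | zero => simp
  | succ N ih =>
    rw [Finset.sum_range_succ, ih]
    rcases Nat.even_or_odd N with hN | hN
    · rw [he N hN, add_zero, show (N + 1) / 2 = N / 2 by obtain ⟨t, ht⟩ := hN; omega]
    · obtain ⟨t, ht⟩ := hN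
      subst ht
      rw [show (2 * t + 1 + 1) / 2 = t + 1 by omega, show (2 * t + 1) / 2 = t by omega,
        Finset.sum_range_succ]

lemma lemA (p : ℕ) (x : ℤ) :
    (x + 1) ^ p - (x - 1) ^ p =
      2 * ∑ j ∈ Finset.range (p / 2 + 1),
        (p.choose (2 * j + 1) : ℤ) * x ^ (p - (2 * j + 1)) := by
  set h : ℕ → ℤ := fun m => x ^ (p - m) * (1 - (-1 : ℤ) ^ m) * (p.choose m : ℤ) with hh
  have he : ∀ m, Even m → h m = 0 := by
    intro m hm
    simp [hh, hm.neg_one_pow]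
  have e1 : (x + 1) ^ p = ∑ k ∈ Finset.range (p + 1), x ^ k * (p.choose k : ℤ) := by
    simpa using add_pow x 1 p
  have e2 : (x - 1) ^ p
      = ∑ k ∈ Finset.range (p + 1), x ^ k * (-1) ^ (p - k) * (p.choose k : ℤ) := by
    rw [sub_eq_add_neg]
    simpa using add_pow x (-1) p
  have step1 : (x + 1) ^ p - (x - 1) ^ p = ∑ m ∈ Finset.range (p + 1), h m := by
    rw [e1, e2, ← Finset.sum_sub_distrib, ← Finset.sum_range_reflect]
    refine Finset.sum_congr rfl fun m hm => ?_
    have hm' : m ≤ p := by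
      have := Finset.mem_range.1 hm; omega
    have e4 : p + 1 - 1 - m = p - m := by omega
    have e5 : p - (p - m) = m := by omega
    have e6 : p.choose (p - m) = p.choose m := Nat.choose_symm hm'
    rw [e4, e5, e6, hh]
    ring
  have hterm : ∀ j, h (2 * j + 1) = (p.choose (2 * j + 1) : ℤ) * x ^ (p - (2 * j + 1)) * 2 := by
    intro j
    have : ((-1 : ℤ)) ^ (2 * j + 1) = -1 := Odd.neg_one_pow ⟨j, by ring⟩
    rw [hh]
    simp only [this]
    ring
  rw [step1, oddSum h he (p + 1), Finset.mul_sum]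
  rcases Nat.even_or_odd p with hp | hp
  · obtain ⟨t, ht⟩ := hp
    have h1 : (p + 1) / 2 = p / 2 := by omega
    rw [h1, Finset.sum_range_succ (fun j => 2 * ((p.choose (2 * j + 1) : ℤ) * x ^ (p - (2 * j + 1))))]
    have h2 : p.choose (2 * (p / 2) + 1) = 0 := Nat.choose_eq_zero_of_lt (by omega)
    rw [h2]
    simp only [Nat.cast_zero, zero_mul, mul_zero, add_zero]
    exact Finset.sum_congr rfl fun j _ => by rw [hterm j]; ring
  · obtain ⟨t, ht⟩ := hp
    have h1 : (p + 1) / 2 = p / 2 + 1 := by omega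
    rw [h1]
    exact Finset.sum_congr rfl fun j _ => by rw [hterm j]; ring

lemma lemB (n p : ℕ) :
    fibConv (n + 2) p = fibConv (n + 1) p + fibConv n p + ((n : ℤ) + 1) ^ p := by
  simp only [fibConv]
  rw [Finset.sum_range_succ _ (n + 2), Finset.sum_range_succ _ (n + 1),
    Finset.sum_range_succ (fun i => (i : ℤ) ^ p * (Nat.fib (n + 1 - i) : ℤ)) (n + 1)]
  rw [show n + 2 - (n + 2) = 0 by omega, show n + 2 - (n + 1) = 1 by omega,
    show n + 1 - (n + 1) = 0 by omega]
  have key : ∑ i ∈ Finset.range (n + 1), (i : ℤ) ^ p * (Nat.fib (n + 2 - i) : ℤ)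
      = ∑ i ∈ Finset.range (n + 1),
        ((i : ℤ) ^ p * (Nat.fib (n + 1 - i) : ℤ) + (i : ℤ) ^ p * (Nat.fib (n - i) : ℤ)) := by
    refine Finset.sum_congr rfl fun i hi => ?_
    have hi' := Finset.mem_range.1 hi
    rw [show n + 2 - i = (n - i) + 2 by omega, Nat.fib_add_two,
      show n + 1 - i = (n - i) + 1 by omega]
    push_cast
    ring
  rw [key, Finset.sum_add_distrib]
  simp only [Nat.fib_zero, Nat.fib_one, Nat.cast_zero, Nat.cast_one, mul_zero, mul_one, add_zero]
  push_cast
  ring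

lemma lemC (p : ℕ) (hp : 1 ≤ p) (n : ℕ) :
    ∑ i ∈ Finset.range (n + 1), ((i : ℤ) + 1) ^ p * (Nat.fib (n - i) : ℤ)
      = fibConv (n + 1) p := by
  rw [fibConv,
    Finset.sum_range_succ' (fun i => (i : ℤ) ^ p * (Nat.fib (n + 1 - i) : ℤ)) (n + 1)]
  have h0 : (((0 : ℕ) : ℤ)) ^ p * (Nat.fib (n + 1 - 0) : ℤ) = 0 := by
    simp [zero_pow (by omega : p ≠ 0)]
  rw [h0, add_zero]
  refine Finset.sum_congr rfl fun i _ => ?_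
  rw [show n + 1 - (i + 1) = n - i by omega]
  push_cast
  ring

lemma lemD (p n : ℕ) :
    ∑ i ∈ Finset.range (n + 2), ((i : ℤ) - 1) ^ p * (Nat.fib (n + 1 - i) : ℤ)
      = (-1) ^ p * (Nat.fib (n + 1) : ℤ) + fibConv n p := by
  rw [Finset.sum_range_succ' (fun i => ((i : ℤ) - 1) ^ p * (Nat.fib (n + 1 - i) : ℤ)) (n + 1)]
  have h1 : ∑ i ∈ Finset.range (n + 1),
      (((i + 1 : ℕ) : ℤ) - 1) ^ p * (Nat.fib (n + 1 - (i + 1)) : ℤ) = fibConv n p := by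
    rw [fibConv]
    refine Finset.sum_congr rfl fun i _ => ?_
    rw [show n + 1 - (i + 1) = n - i by omega]
    push_cast
    ring
  rw [h1]
  simp only [Nat.sub_zero, Nat.cast_zero, zero_sub]
  ring_nf

/-- For every `p ≥ 1` and every `n : ℕ`,
`(-1)^p·F_n - n^p = 𝒞_n^{(p)} - 2·∑_{j=0}^{⌊p/2⌋} C(p,2j+1)·𝒞_n^{(p-2j-1)}`. -/
theorem fibConv_recursion (p : ℕ) (hp : 1 ≤ p) (n : ℕ) :
    (-1) ^ p * (Nat.fib n : ℤ) - (n : ℤ) ^ p =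
      fibConv n p - 2 * ∑ j ∈ Finset.range (p / 2 + 1),
        (p.choose (2 * j + 1) : ℤ) * fibConv n (p - (2 * j + 1)) := by
  have key : 2 * ∑ j ∈ Finset.range (p / 2 + 1),
        (p.choose (2 * j + 1) : ℤ) * fibConv n (p - (2 * j + 1)) =
      ∑ i ∈ Finset.range (n + 1),
        (((i : ℤ) + 1) ^ p - ((i : ℤ) - 1) ^ p) * (Nat.fib (n - i) : ℤ) := by
    simp only [fibConv, Finset.mul_sum]
    rw [Finset.sum_comm]
    refine Finset.sum_congr rfl fun i _ => ?_
    rw [lemA p i, Finset.mul_sum, Finset.sum_mul]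
    exact Finset.sum_congr rfl fun j _ => by ring
  rw [key]
  rcases n with _ | m
  · have hp' : p ≠ 0 := by omega
    simp [fibConv, zero_pow hp']
  · have split : ∑ i ∈ Finset.range (m + 2),
          (((i : ℤ) + 1) ^ p - ((i : ℤ) - 1) ^ p) * (Nat.fib (m + 1 - i) : ℤ)
        = (∑ i ∈ Finset.range (m + 2), ((i : ℤ) + 1) ^ p * (Nat.fib (m + 1 - i) : ℤ))
          - ∑ i ∈ Finset.range (m + 2), ((i : ℤ) - 1) ^ p * (Nat.fib (m + 1 - i) : ℤ) := by
      rw [← Finset.sum_sub_distrib]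
      exact Finset.sum_congr rfl fun i _ => by ring
    rw [split, lemC p hp (m + 1), lemD p m, lemB m p]
    push_cast
    ring
end

section
/- For every natural number p and every natural number n, ∑_{i=0}^{n} i^p·F_i = ( ∑_{k=0}^{p} C(p,k)·(-1)^k·A_k·n^{p-k} )·F_n + ( ∑_{k=0}^{p} C(p,k)·(-1)^k·B_k·n^{p-k} )·F_{n+1} - (-1)^p·B_p, where the sum on the left uses the convention 0^0 = 1, and the identity holds in the integers. -/
open Finset

/-- The sequence `A` with `A_0 = 1` and
`A_p = (-1)^p + 2·∑_{j=0}^{⌊p/2⌋} C(p,2j+1)·A_{p-2j-1}` for `p > 0`. -/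
def A : ℕ → ℤ
  | 0 => 1
  | p + 1 => (-1) ^ (p + 1) + 2 * ∑ j ∈ Finset.range ((p + 1) / 2 + 1),
      (((p + 1).choose (2 * j + 1) : ℤ)) * A (p - 2 * j)
  decreasing_by exact Nat.lt_succ_of_le (Nat.sub_le p (2 * j))

/-- The sequence `B` with `B_0 = 1` and
`B_p = 2·∑_{j=0}^{⌊p/2⌋} C(p,2j+1)·B_{p-2j-1}` for `p > 0`. -/
def B : ℕ → ℤ
  | 0 => 1
  | p + 1 => 2 * ∑ j ∈ Finset.range ((p + 1) / 2 + 1),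
      (((p + 1).choose (2 * j + 1) : ℤ)) * B (p - 2 * j)
  decreasing_by exact Nat.lt_succ_of_le (Nat.sub_le p (2 * j))

lemma parity_split (f : ℕ → ℤ) (n : ℕ) : ∑ k ∈ range n, f k =
    (∑ j ∈ range ((n+1)/2), f (2*j)) + ∑ j ∈ range (n/2), f (2*j+1) := by
  induction n with
  | zero => simp
  | succ n ih =>
    rw [sum_range_succ, ih]
    rcases Nat.even_or_odd n with ⟨m, hm⟩ | ⟨m, hm⟩
    · have h1 : (n+1+1)/2 = m+1 := by omega
      have h2 : (n+1)/2 = m := by omega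
      have h3 : n/2 = m := by omega
      rw [h1, h2, h3, sum_range_succ]
      rw [show 2*m = n by omega]; ring
    · have h1 : (n+1+1)/2 = m+1 := by omega
      have h2 : (n+1)/2 = m+1 := by omega
      have h3 : n/2 = m := by omega
      rw [h1, h2, h3, sum_range_succ, sum_range_succ]
      rw [show 2*m+1 = n by omega]; ring

lemma odd_reindex (h : ℕ → ℤ) (q : ℕ) :
    2 * ∑ j ∈ range ((q+1)/2 + 1), ((q+1).choose (2*j+1) : ℤ) * h (q - 2*j)
    = ∑ k ∈ range (q+2), ((q+1).choose k : ℤ) * (1 - (-1:ℤ)^k) * h (q+1-k) := by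
  rw [parity_split (fun k => ((q+1).choose k : ℤ) * (1 - (-1:ℤ)^k) * h (q+1-k)) (q+2)]
  have heven : (∑ j ∈ range ((q+2+1)/2),
      ((q+1).choose (2*j) : ℤ) * (1 - (-1:ℤ)^(2*j)) * h (q+1-2*j)) = 0 := by
    apply sum_eq_zero; intro j _; simp [pow_mul]
  rw [heven, zero_add]
  have hodd : ∀ j, ((q+1).choose (2*j+1) : ℤ) * (1 - (-1:ℤ)^(2*j+1)) * h (q+1-(2*j+1))
      = 2 * (((q+1).choose (2*j+1) : ℤ) * h (q - 2*j)) := by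
    intro j
    have : q+1-(2*j+1) = q - 2*j := by omega
    rw [this, pow_succ, pow_mul]; ring
  rw [Finset.mul_sum]
  symm
  rw [← Finset.sum_subset (Finset.range_subset_range.mpr (by omega : (q+2)/2 ≤ (q+1)/2+1))]
  · exact Finset.sum_congr rfl fun j _ => hodd j
  · intro j _ hj
    simp only [Finset.mem_range, not_lt] at hj
    have : q+1 < 2*j+1 := by omega
    rw [Nat.choose_eq_zero_of_lt this]
    simp

lemma vand (f : ℕ → ℤ) (c x : ℤ) (p : ℕ) :
    ∑ k ∈ range (p+1), (p.choose k : ℤ) * f k * (x + c) ^ (p - k)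
    = ∑ m ∈ range (p+1), (p.choose m : ℤ) *
        (∑ k ∈ range (m+1), (m.choose k : ℤ) * f k * c ^ (m - k)) * x ^ (p - m) := by
  symm
  calc
    ∑ m ∈ range (p+1), (p.choose m : ℤ) *
        (∑ k ∈ range (m+1), (m.choose k : ℤ) * f k * c ^ (m - k)) * x ^ (p - m)
      = ∑ m ∈ range (p+1), ∑ k ∈ range (p+1),
          (p.choose m : ℤ) * ((m.choose k : ℤ) * f k * c ^ (m - k)) * x ^ (p - m) := by
        refine sum_congr rfl fun m hm => ?_
        rw [Finset.sum_subset (Finset.range_subset_range.mpr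
          (by simp only [mem_range] at hm; omega : m+1 ≤ p+1))]
        · rw [Finset.mul_sum, Finset.sum_mul]
        · intro k _ hk
          simp only [mem_range, not_lt] at hk
          rw [Nat.choose_eq_zero_of_lt (by omega : m < k)]
          simp
    _ = ∑ k ∈ range (p+1), ∑ m ∈ range (p+1),
          (p.choose m : ℤ) * ((m.choose k : ℤ) * f k * c ^ (m - k)) * x ^ (p - m) :=
        Finset.sum_comm
    _ = ∑ k ∈ range (p+1), (p.choose k : ℤ) * f k * (x + c) ^ (p - k) := by
        refine sum_congr rfl fun k hk => ?_
        simp only [mem_range] at hk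
        have hkp : k ≤ p := by omega
        rw [← Finset.sum_subset (fun m hm => Finset.mem_range.mpr (Finset.mem_Ico.mp hm).2 :
            Finset.Ico k (p+1) ⊆ Finset.range (p+1))]
        · rw [Finset.sum_Ico_eq_sum_range]
          have hlen : p + 1 - k = (p - k) + 1 := by omega
          rw [hlen]
          have : ∀ i ∈ range ((p-k)+1),
              (p.choose (k+i) : ℤ) * (((k+i).choose k : ℤ) * f k * c ^ (k+i-k)) * x ^ (p-(k+i))
              = ((p.choose k : ℤ) * f k) * (c ^ i * x ^ ((p-k)-i) * ((p-k).choose i : ℤ)) := by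
            intro i hi
            simp only [mem_range] at hi
            have h1 : k + i ≤ p := by omega
            have h2 : k ≤ k + i := by omega
            have hc : (p.choose (k+i)) * ((k+i).choose k) = p.choose k * (p-k).choose (i) := by
              have := Nat.choose_mul (n := p) h2
              simpa using this
            have hc' : (p.choose (k+i) : ℤ) * ((k+i).choose k : ℤ)
                = (p.choose k : ℤ) * ((p-k).choose i : ℤ) := by exact_mod_cast hc
            have h3 : k + i - k = i := by omega
            have h4 : p - (k+i) = (p-k) - i := by omega
            rw [h3, h4]
            linear_combination (f k * c ^ i * x ^ (p - k - i)) * hc'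
          rw [Finset.sum_congr rfl this, ← Finset.mul_sum]
          rw [add_comm x c, add_pow]
        · intro m hm1 hm2
          simp only [Finset.mem_range] at hm1
          simp only [Finset.mem_Ico, not_and, not_lt] at hm2
          have : m < k := by
            rcases Nat.lt_or_ge m k with h | h
            · exact h
            · omega
          rw [Nat.choose_eq_zero_of_lt this]
          simp
def Tb (p : ℕ) (x : ℤ) : ℤ := ∑ k ∈ Finset.range (p+1), (p.choose k : ℤ) * B k * x ^ (p - k)

lemma Tb_zero (m : ℕ) : Tb m 0 = B m := by
  unfold Tb
  rw [Finset.sum_eq_single_of_mem m (Finset.self_mem_range_succ m)]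
  · simp
  · intro k hk hne
    simp only [Finset.mem_range] at hk
    rw [zero_pow (by omega : m - k ≠ 0)]; ring

lemma B_odd (q : ℕ) : B (q+1)
    = ∑ k ∈ Finset.range (q+2), ((q+1).choose k : ℤ) * (1 - (-1:ℤ)^k) * B (q+1-k) := by
  rw [← odd_reindex B q, B]

lemma reflect_odd (h : ℕ → ℤ) (q : ℕ) :
    ∑ k ∈ Finset.range (q+2), ((q+1).choose k : ℤ) * (1 - (-1:ℤ)^k) * h (q+1-k)
    = ∑ k ∈ Finset.range (q+2), ((q+1).choose k : ℤ) * (1 - (-1:ℤ)^(q+1-k)) * h k := by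
  rw [← Finset.sum_range_reflect]
  refine Finset.sum_congr rfl fun j hj => ?_
  simp only [Finset.mem_range] at hj
  have hj' : j ≤ q+1 := by omega
  rw [show q+2-1-j = q+1-j by omega, Nat.choose_symm hj', show q+1-(q+1-j) = j by omega]

lemma Pcoef (m : ℕ) :
    (∑ k ∈ Finset.range (m+1), (m.choose k : ℤ) * B k * (1:ℤ) ^ (m-k))
      + (if m = 0 then (1:ℤ) else 0)
    = B m + ∑ k ∈ Finset.range (m+1), (m.choose k : ℤ) * B k * (-1:ℤ) ^ (m-k) := by
  cases m with
  | zero => simp [B]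
  | succ q =>
    simp only [if_neg (Nat.succ_ne_zero q), add_zero]
    have key : ∑ k ∈ Finset.range (q+2),
        ((q+1).choose k : ℤ) * (1 - (-1:ℤ)^(q+1-k)) * B k = B (q+1) := by
      rw [← reflect_odd B q, ← B_odd q]
    have expand : ∀ k ∈ Finset.range (q+2),
        ((q+1).choose k : ℤ) * (1 - (-1:ℤ)^(q+1-k)) * B k
        = ((q+1).choose k : ℤ) * B k * (1:ℤ)^(q+1-k)
          - ((q+1).choose k : ℤ) * B k * (-1:ℤ)^(q+1-k) := by
      intro k _; rw [one_pow]; ring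
    rw [Finset.sum_congr rfl expand, Finset.sum_sub_distrib] at key
    linarith [key]

lemma Tcomp (m : ℕ) (x : ℤ) :
    Tb m (x - 1) = ∑ j ∈ Finset.range (m+1), (m.choose j : ℤ) * Tb j (-1) * x ^ (m-j) := by
  unfold Tb
  rw [sub_eq_add_neg]
  exact vand B (-1) x m

lemma PB (p : ℕ) (x : ℤ) : Tb p (x+1) + x^p = Tb p x + Tb p (x-1) := by
  have h1 : Tb p (x+1) = ∑ m ∈ Finset.range (p+1), (p.choose m : ℤ) *
      (∑ k ∈ Finset.range (m+1), (m.choose k : ℤ) * B k * (1:ℤ)^(m-k)) * x^(p-m) := by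
    unfold Tb; exact vand B 1 x p
  have h3 : x^p = ∑ m ∈ Finset.range (p+1),
      (p.choose m : ℤ) * (if m = 0 then (1:ℤ) else 0) * x^(p-m) := by
    rw [Finset.sum_eq_single_of_mem 0 (Finset.mem_range.mpr (by omega))]
    · simp
    · intro k _ hk; simp [hk]
  rw [h1, h3, Tcomp p x]
  unfold Tb
  rw [← Finset.sum_add_distrib, ← Finset.sum_add_distrib]
  refine Finset.sum_congr rfl fun m hm => ?_
  have hp := Pcoef m
  unfold Tb at *
  linear_combination ((p.choose m : ℤ) * x^(p-m)) * hp

lemma A_eq : ∀ m, A m = Tb m (-1) := by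
  intro m
  induction m using Nat.strong_induction_on with
  | _ m ih =>
    match m with
    | 0 => simp [A, B, Tb]
    | q+1 =>
      rw [A]
      have hsub : ∀ j ∈ Finset.range ((q+1)/2+1), ((q+1).choose (2*j+1) : ℤ) * A (q-2*j)
          = ((q+1).choose (2*j+1) : ℤ) * Tb (q-2*j) (-1) := by
        intro j _; rw [ih (q-2*j) (by omega)]
      rw [Finset.sum_congr rfl hsub, odd_reindex (fun r => Tb r (-1)) q,
        reflect_odd (fun r => Tb r (-1)) q]
      have expand : ∀ k ∈ Finset.range (q+2),
          ((q+1).choose k : ℤ) * (1 - (-1:ℤ)^(q+1-k)) * Tb k (-1)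
          = ((q+1).choose k : ℤ) * Tb k (-1) * (1:ℤ)^(q+1-k)
            - ((q+1).choose k : ℤ) * Tb k (-1) * (-1:ℤ)^(q+1-k) := by
        intro k _; rw [one_pow]; ring
      rw [Finset.sum_congr rfl expand, Finset.sum_sub_distrib]
      have e1 := Tcomp (q+1) 1
      have e2 := Tcomp (q+1) (-1)
      norm_num at e1 e2
      simp only [show q + 1 + 1 = q + 2 from rfl] at e1 e2
      have e3 := PB (q+1) (-1)
      norm_num at e3
      simp only [one_pow, mul_one]
      rw [← e1, ← e2]
      linarith [e3]

lemma inner_B (m : ℕ) :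
    ∑ k ∈ Finset.range (m+1), (m.choose k : ℤ) * ((-1:ℤ)^k * B k) * (1:ℤ)^(m-k)
    = (-1:ℤ)^m * Tb m (-1) := by
  unfold Tb
  rw [Finset.mul_sum]
  refine Finset.sum_congr rfl fun k hk => ?_
  simp only [Finset.mem_range] at hk
  have hs : (-1:ℤ)^k = (-1:ℤ)^m * (-1:ℤ)^(m-k) := by
    rw [← pow_add, show m + (m-k) = k + 2*(m-k) by omega, pow_add, pow_mul]
    norm_num
  rw [one_pow, hs]; ring

lemma inner_A (m : ℕ) :
    ∑ k ∈ Finset.range (m+1), (m.choose k : ℤ) * ((-1:ℤ)^k * A k) * (1:ℤ)^(m-k)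
    = (-1:ℤ)^m * Tb m (-2) := by
  have e2 := Tcomp m (-1)
  norm_num at e2
  rw [e2, Finset.mul_sum]
  refine Finset.sum_congr rfl fun k hk => ?_
  simp only [Finset.mem_range] at hk
  have hs : (-1:ℤ)^k = (-1:ℤ)^m * (-1:ℤ)^(m-k) := by
    rw [← pow_add, show m + (m-k) = k + 2*(m-k) by omega, pow_add, pow_mul]
    norm_num
  rw [one_pow, hs, A_eq k]; ring

lemma key1 (p : ℕ) (x : ℤ) :
    ∑ k ∈ Finset.range (p+1), (p.choose k : ℤ) * (-1)^k * B k * (x+1)^(p-k)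
    = ∑ k ∈ Finset.range (p+1), (p.choose k : ℤ) * (-1)^k * A k * x^(p-k) := by
  calc ∑ k ∈ Finset.range (p+1), (p.choose k : ℤ) * (-1)^k * B k * (x+1)^(p-k)
      = ∑ k ∈ Finset.range (p+1), (p.choose k : ℤ) * ((-1:ℤ)^k * B k) * (x+1)^(p-k) :=
        Finset.sum_congr rfl fun k _ => by ring
    _ = ∑ m ∈ Finset.range (p+1), (p.choose m : ℤ) *
          (∑ k ∈ Finset.range (m+1), (m.choose k : ℤ) * ((-1:ℤ)^k * B k) * (1:ℤ)^(m-k))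
          * x^(p-m) := vand _ 1 x p
    _ = ∑ k ∈ Finset.range (p+1), (p.choose k : ℤ) * (-1)^k * A k * x^(p-k) := by
        refine Finset.sum_congr rfl fun m hm => ?_
        rw [inner_B m, A_eq m]; ring

lemma key2 (p : ℕ) (x : ℤ) :
    (∑ k ∈ Finset.range (p+1), (p.choose k : ℤ) * (-1)^k * A k * (x+1)^(p-k))
      + ∑ k ∈ Finset.range (p+1), (p.choose k : ℤ) * (-1)^k * B k * (x+1)^(p-k)
    = (∑ k ∈ Finset.range (p+1), (p.choose k : ℤ) * (-1)^k * B k * x^(p-k)) + (x+1)^p := by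
  have hA : ∑ k ∈ Finset.range (p+1), (p.choose k : ℤ) * (-1)^k * A k * (x+1)^(p-k)
      = ∑ m ∈ Finset.range (p+1), (p.choose m : ℤ) * ((-1:ℤ)^m * Tb m (-2)) * x^(p-m) := by
    calc ∑ k ∈ Finset.range (p+1), (p.choose k : ℤ) * (-1)^k * A k * (x+1)^(p-k)
        = ∑ k ∈ Finset.range (p+1), (p.choose k : ℤ) * ((-1:ℤ)^k * A k) * (x+1)^(p-k) :=
          Finset.sum_congr rfl fun k _ => by ring
      _ = _ := by
          rw [vand (fun k => (-1:ℤ)^k * A k) 1 x p]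
          exact Finset.sum_congr rfl fun m _ => by rw [inner_A m]
  have hB : ∑ k ∈ Finset.range (p+1), (p.choose k : ℤ) * (-1)^k * B k * (x+1)^(p-k)
      = ∑ m ∈ Finset.range (p+1), (p.choose m : ℤ) * ((-1:ℤ)^m * Tb m (-1)) * x^(p-m) := by
    calc ∑ k ∈ Finset.range (p+1), (p.choose k : ℤ) * (-1)^k * B k * (x+1)^(p-k)
        = ∑ k ∈ Finset.range (p+1), (p.choose k : ℤ) * ((-1:ℤ)^k * B k) * (x+1)^(p-k) :=
          Finset.sum_congr rfl fun k _ => by ring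
      _ = _ := by
          rw [vand (fun k => (-1:ℤ)^k * B k) 1 x p]
          exact Finset.sum_congr rfl fun m _ => by rw [inner_B m]
  have hpow : (x+1)^p = ∑ m ∈ Finset.range (p+1),
      (1:ℤ)^m * x^(p-m) * (p.choose m : ℤ) := by
    rw [add_comm x 1, add_pow]
  rw [hA, hB, hpow, ← Finset.sum_add_distrib, ← Finset.sum_add_distrib]
  refine Finset.sum_congr rfl fun m hm => ?_
  have e3 := PB m (-1)
  norm_num at e3
  have hT0 := Tb_zero m
  have h1 : (-1:ℤ)^m * (-1:ℤ)^m = 1 := by rw [← mul_pow]; norm_num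
  linear_combination (-((p.choose m : ℤ) * (-1:ℤ)^m * x^(p-m))) * e3
    + ((p.choose m : ℤ) * (-1:ℤ)^m * x^(p-m)) * hT0
    + ((p.choose m : ℤ) * x^(p-m)) * h1

/-- **Theorem 3 of the paper, the Brousseau sums.** For all `p n : ℕ`,
`∑_{i=0}^{n} i^p·F_i = (∑_{k=0}^{p} C(p,k)·(-1)^k·A_k·n^(p-k))·F_n
  + (∑_{k=0}^{p} C(p,k)·(-1)^k·B_k·n^(p-k))·F_{n+1} - (-1)^p·B_p`,
where the left-hand sum uses the convention `0^0 = 1` (as `(0 : ℤ) ^ 0` in Lean). -/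
theorem brousseau_sum_eq (p n : ℕ) :
    ∑ i ∈ Finset.range (n + 1), (i : ℤ) ^ p * (Nat.fib i : ℤ) =
      (∑ k ∈ Finset.range (p + 1), (p.choose k : ℤ) * (-1) ^ k * A k * (n : ℤ) ^ (p - k))
          * (Nat.fib n : ℤ)
        + (∑ k ∈ Finset.range (p + 1), (p.choose k : ℤ) * (-1) ^ k * B k * (n : ℤ) ^ (p - k))
          * (Nat.fib (n + 1) : ℤ)
        - (-1) ^ p * B p := by
  induction n with
  | zero =>
    have h0 : ∀ (g : ℕ → ℤ), ∑ k ∈ Finset.range (p+1),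
        (p.choose k : ℤ) * (-1)^k * g k * (0:ℤ)^(p-k) = (-1)^p * g p := by
      intro g
      rw [Finset.sum_eq_single_of_mem p (Finset.self_mem_range_succ p)]
      · simp
      · intro k hk hne
        simp only [Finset.mem_range] at hk
        rw [zero_pow (by omega : p - k ≠ 0)]; ring
    simp only [Nat.cast_zero, Nat.fib_zero, Nat.fib_one, Nat.cast_zero, Nat.cast_one,
      mul_zero, zero_add, mul_one, h0 A, h0 B]
    simp
  | succ n ih =>
    rw [Finset.sum_range_succ, ih]
    have hf : (Nat.fib (n+1+1) : ℤ) = (Nat.fib (n+1) : ℤ) + (Nat.fib n : ℤ) := by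
      rw [Nat.fib_add_two]; push_cast; ring
    have h1 := key1 p (n : ℤ)
    have h2 := key2 p (n : ℤ)
    push_cast [hf]
    linear_combination (-(Nat.fib n : ℤ)) * h1 - (Nat.fib (n+1) : ℤ) * h2
end

section
/- For every natural number k ≥ 1, A_k = ∑_{j=0}^{k-1} C(k,j)·B_j. -/
open Finset


/-- the "odd part" transform -/
def wj (X : ℕ → ℤ) (k : ℕ) : ℤ :=
  ∑ j ∈ range (k + 1), (1 - (-1 : ℤ) ^ (k - j)) * (k.choose j : ℤ) * X j

def vB (k : ℕ) : ℤ := ∑ m ∈ range (k + 1), (-1 : ℤ) ^ (k - m) * (k.choose m : ℤ) * B m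

lemma wj_reflect (X : ℕ → ℤ) (k : ℕ) :
    wj X k = ∑ i ∈ range (k + 1), (1 - (-1 : ℤ) ^ i) * (k.choose i : ℤ) * X (k - i) := by
  rw [wj, ← Finset.sum_range_reflect]
  refine Finset.sum_congr rfl fun i hi => ?_
  have hik : i ≤ k := Nat.lt_succ_iff.mp (Finset.mem_range.mp hi)
  have h1 : k + 1 - 1 - i = k - i := by omega
  have h2 : k - (k - i) = i := Nat.sub_sub_self hik
  rw [h1, h2, Nat.choose_symm hik]

lemma odd_sum (X : ℕ → ℤ) (p : ℕ) :
    2 * ∑ j ∈ range ((p + 1) / 2 + 1), (((p + 1).choose (2 * j + 1) : ℤ)) * X (p - 2 * j)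
      = wj X (p + 1) := by
  rw [wj_reflect]
  have hext : ∑ i ∈ range (p + 2), (1 - (-1 : ℤ) ^ i) * ((p + 1).choose i : ℤ) * X (p + 1 - i)
      = ∑ i ∈ range (p + 3), (1 - (-1 : ℤ) ^ i) * ((p + 1).choose i : ℤ) * X (p + 1 - i) := by
    rw [Finset.sum_range_succ (n := p + 2)]
    have : (p + 1).choose (p + 2) = 0 := Nat.choose_eq_zero_of_lt (by omega)
    rw [this]; push_cast; ring
  rw [hext, ← Finset.sum_filter_add_sum_filter_not (range (p + 3)) (fun i => Odd i)]
  have heven : ∑ i ∈ (range (p + 3)).filter (fun i => ¬ Odd i),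
      (1 - (-1 : ℤ) ^ i) * ((p + 1).choose i : ℤ) * X (p + 1 - i) = 0 := by
    refine Finset.sum_eq_zero fun i hi => ?_
    have : Even i := Nat.not_odd_iff_even.mp (Finset.mem_filter.mp hi).2
    rw [this.neg_one_pow]; ring
  rw [heven, add_zero]
  rw [Finset.mul_sum]
  refine Finset.sum_nbij' (fun j => 2 * j + 1) (fun i => i / 2) ?_ ?_ ?_ ?_ ?_
  · intro j hj
    have hj' : j ≤ (p + 1) / 2 := Nat.lt_succ_iff.mp (Finset.mem_range.mp hj)
    refine Finset.mem_filter.mpr ⟨Finset.mem_range.mpr (by omega), ⟨j, by omega⟩⟩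
  · intro i hi
    obtain ⟨hi1, hi2⟩ := Finset.mem_filter.mp hi
    obtain ⟨m, hm⟩ := hi2
    have : i < p + 3 := Finset.mem_range.mp hi1
    refine Finset.mem_range.mpr ?_
    omega
  · intro j hj; omega
  · intro i hi
    obtain ⟨m, hm⟩ := (Finset.mem_filter.mp hi).2
    omega
  · intro j hj
    have hodd : Odd (2 * j + 1) := ⟨j, by omega⟩
    rw [hodd.neg_one_pow]
    have : p + 1 - (2 * j + 1) = p - 2 * j := by omega
    rw [this]; ring

lemma RA (p : ℕ) : A (p + 1) = (-1) ^ (p + 1) + wj A (p + 1) := by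
  rw [A, odd_sum]

lemma RB (p : ℕ) : B (p + 1) = wj B (p + 1) := by
  rw [B, odd_sum]

lemma swap_lemma (c e X : ℕ → ℤ) (k : ℕ) :
    ∑ j ∈ range (k + 1), c (k - j) * (k.choose j : ℤ) *
        (∑ m ∈ range (j + 1), e (j - m) * (j.choose m : ℤ) * X m)
      = ∑ m ∈ range (k + 1),
          (∑ i ∈ range (k - m + 1), c (k - m - i) * e i * ((k - m).choose i : ℤ))
            * (k.choose m : ℤ) * X m := by
  have h1 : ∑ j ∈ range (k + 1), c (k - j) * (k.choose j : ℤ) *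
        (∑ m ∈ range (j + 1), e (j - m) * (j.choose m : ℤ) * X m)
      = ∑ j ∈ range (k + 1), ∑ m ∈ range (k + 1),
          c (k - j) * (k.choose j : ℤ) * (e (j - m) * (j.choose m : ℤ) * X m) := by
    refine Finset.sum_congr rfl fun j hj => ?_
    rw [Finset.mul_sum]
    refine Finset.sum_subset (Finset.range_subset_range.mpr
      (Nat.succ_le_succ (Nat.lt_succ_iff.mp (Finset.mem_range.mp hj)))) ?_
    intro m hm hnm
    have hjm : j < m := by
      by_contra h
      exact hnm (Finset.mem_range.mpr (by omega))
    rw [Nat.choose_eq_zero_of_lt hjm]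
    push_cast; ring
  rw [h1, Finset.sum_comm]
  refine Finset.sum_congr rfl fun m hm => ?_
  have hmk : m ≤ k := Nat.lt_succ_iff.mp (Finset.mem_range.mp hm)
  have hlow : ∑ j ∈ Finset.Ico 0 m,
      c (k - j) * (k.choose j : ℤ) * (e (j - m) * (j.choose m : ℤ) * X m) = 0 := by
    refine Finset.sum_eq_zero fun j hj => ?_
    rw [Nat.choose_eq_zero_of_lt (Finset.mem_Ico.mp hj).2]
    push_cast; ring
  have hsplit : ∑ j ∈ range (k + 1),
      c (k - j) * (k.choose j : ℤ) * (e (j - m) * (j.choose m : ℤ) * X m)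
      = ∑ j ∈ Finset.Ico m (k + 1),
          c (k - j) * (k.choose j : ℤ) * (e (j - m) * (j.choose m : ℤ) * X m) := by
    rw [Finset.range_eq_Ico,
      ← Finset.sum_Ico_consecutive _ (Nat.zero_le m) (by omega : m ≤ k + 1), hlow, zero_add]
  rw [hsplit, Finset.sum_Ico_eq_sum_range]
  have hkm : k + 1 - m = k - m + 1 := by omega
  rw [hkm, Finset.sum_mul, Finset.sum_mul]
  refine Finset.sum_congr rfl fun i hi => ?_
  have hik : i ≤ k - m := Nat.lt_succ_iff.mp (Finset.mem_range.mp hi)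
  have h2 : k - (m + i) = k - m - i := by omega
  have h3 : m + i - m = i := by omega
  have h4 : m + i ≤ k := by omega
  have hch := Nat.choose_mul (n := k) (Nat.le_add_right m i)
  rw [h3] at hch
  have hchz : ((k.choose (m + i) : ℤ)) * ((m + i).choose m : ℤ)
      = (k.choose m : ℤ) * ((k - m).choose i : ℤ) := by exact_mod_cast hch
  rw [h2, h3]
  linear_combination (c (k - m - i) * e i * X m) * hchz

lemma inner1 {d : ℕ} (hd : d ≠ 0) :
    ∑ i ∈ range (d + 1), (1 - (-1 : ℤ) ^ (d - i)) * (-1 : ℤ) ^ i * ((d.choose i : ℤ))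
      = -(-2 : ℤ) ^ d := by
  have hterm : ∀ i ∈ range (d + 1),
      (1 - (-1 : ℤ) ^ (d - i)) * (-1 : ℤ) ^ i * ((d.choose i : ℤ))
        = (-1 : ℤ) ^ i * (d.choose i : ℤ) - (-1 : ℤ) ^ d * (d.choose i : ℤ) := by
    intro i hi
    have hik : i ≤ d := Nat.lt_succ_iff.mp (Finset.mem_range.mp hi)
    have : (-1 : ℤ) ^ (d - i) * (-1 : ℤ) ^ i = (-1 : ℤ) ^ d := by
      rw [← pow_add, Nat.sub_add_cancel hik]
    linear_combination (-(d.choose i : ℤ)) * this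
  rw [Finset.sum_congr rfl hterm, Finset.sum_sub_distrib,
    Int.alternating_sum_range_choose_of_ne hd, ← Finset.mul_sum]
  have hs : ∑ i ∈ range (d + 1), ((d.choose i : ℤ)) = 2 ^ d := by
    exact_mod_cast Nat.sum_range_choose d
  rw [hs]
  rw [show (-2 : ℤ) = -1 * 2 by norm_num, mul_pow]
  ring

lemma inner2 {d : ℕ} (hd : d ≠ 0) :
    ∑ i ∈ range (d + 1), (-1 : ℤ) ^ (d - i) * (1 - (-1 : ℤ) ^ i) * ((d.choose i : ℤ))
      = -(-2 : ℤ) ^ d := by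
  have hterm : ∀ i ∈ range (d + 1),
      (-1 : ℤ) ^ (d - i) * (1 - (-1 : ℤ) ^ i) * ((d.choose i : ℤ))
        = (1 - (-1 : ℤ) ^ (d - i)) * (-1 : ℤ) ^ i * ((d.choose i : ℤ))
          + ((-1 : ℤ) ^ (d - i) - (-1 : ℤ) ^ i) * (d.choose i : ℤ) := by
    intro i hi; ring
  rw [Finset.sum_congr rfl hterm, Finset.sum_add_distrib, inner1 hd]
  have : ∑ i ∈ range (d + 1), ((-1 : ℤ) ^ (d - i) - (-1 : ℤ) ^ i) * (d.choose i : ℤ) = 0 := by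
    have hrefl : ∑ i ∈ range (d + 1), (-1 : ℤ) ^ (d - i) * (d.choose i : ℤ)
        = ∑ i ∈ range (d + 1), (-1 : ℤ) ^ i * (d.choose i : ℤ) := by
      rw [← Finset.sum_range_reflect]
      refine Finset.sum_congr rfl fun i hi => ?_
      have hik : i ≤ d := Nat.lt_succ_iff.mp (Finset.mem_range.mp hi)
      have h1 : d + 1 - 1 - i = d - i := by omega
      have h2 : d - (d - i) = i := Nat.sub_sub_self hik
      rw [h1, h2, Nat.choose_symm hik]
    have := Finset.sum_sub_distrib (s := range (d + 1))
      (f := fun i => (-1 : ℤ) ^ (d - i) * (d.choose i : ℤ))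
      (g := fun i => (-1 : ℤ) ^ i * (d.choose i : ℤ))
    calc ∑ i ∈ range (d + 1), ((-1 : ℤ) ^ (d - i) - (-1 : ℤ) ^ i) * (d.choose i : ℤ)
        = ∑ i ∈ range (d + 1), ((-1 : ℤ) ^ (d - i) * (d.choose i : ℤ)
            - (-1 : ℤ) ^ i * (d.choose i : ℤ)) := by
          refine Finset.sum_congr rfl fun i hi => by ring
      _ = 0 := by rw [Finset.sum_sub_distrib, hrefl, sub_self]
  rw [this, add_zero]

lemma key_K (k : ℕ) :
    vB k = (-1) ^ k - ∑ m ∈ range k, (-2 : ℤ) ^ (k - m) * (k.choose m : ℤ) * B m := by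
  have hR : ∑ j ∈ range (k + 1), (-1 : ℤ) ^ (k - j) * (k.choose j : ℤ) * (B j - wj B j)
      = (-1) ^ k := by
    rw [Finset.sum_eq_single_of_mem 0 (Finset.mem_range.mpr (by omega))]
    · simp [B, wj]
    · intro j hj hj0
      obtain ⟨p, rfl⟩ := Nat.exists_eq_succ_of_ne_zero hj0
      rw [← RB p, sub_self, mul_zero]
  have hexp : ∑ j ∈ range (k + 1), (-1 : ℤ) ^ (k - j) * (k.choose j : ℤ) * (B j - wj B j)
      = vB k - ∑ j ∈ range (k + 1), (-1 : ℤ) ^ (k - j) * (k.choose j : ℤ) * wj B j := by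
    rw [vB, ← Finset.sum_sub_distrib]
    exact Finset.sum_congr rfl fun j hj => by ring
  have hswap := swap_lemma (fun i => (-1 : ℤ) ^ i) (fun i => 1 - (-1 : ℤ) ^ i) B k
  have hlhs : ∑ j ∈ range (k + 1), (-1 : ℤ) ^ (k - j) * (k.choose j : ℤ) * wj B j
      = ∑ m ∈ range (k + 1),
          (∑ i ∈ range (k - m + 1),
            (-1 : ℤ) ^ (k - m - i) * (1 - (-1 : ℤ) ^ i) * ((k - m).choose i : ℤ))
            * (k.choose m : ℤ) * B m := by
    simp only [wj]; exact hswap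
  have hrhs : ∑ m ∈ range (k + 1),
      (∑ i ∈ range (k - m + 1),
        (-1 : ℤ) ^ (k - m - i) * (1 - (-1 : ℤ) ^ i) * ((k - m).choose i : ℤ))
        * (k.choose m : ℤ) * B m
      = -∑ m ∈ range k, (-2 : ℤ) ^ (k - m) * (k.choose m : ℤ) * B m := by
    rw [Finset.sum_range_succ]
    have hlast : (∑ i ∈ range (k - k + 1),
        (-1 : ℤ) ^ (k - k - i) * (1 - (-1 : ℤ) ^ i) * ((k - k).choose i : ℤ)) = 0 := by
      rw [Nat.sub_self]; simp
    rw [hlast, zero_mul, zero_mul, add_zero, ← Finset.sum_neg_distrib]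
    refine Finset.sum_congr rfl fun m hm => ?_
    have hmk : m < k := Finset.mem_range.mp hm
    rw [inner2 (by omega : k - m ≠ 0)]
    ring
  rw [hexp, hlhs, hrhs] at hR
  linarith

lemma A_eq_vB : ∀ k, A k = vB k := by
  intro k
  induction k using Nat.strong_induction_on with
  | _ k ih =>
    match k, ih with
    | 0, _ => simp [A, vB, B]
    | p + 1, ih =>
      rw [RA p]
      have h1 : wj A (p + 1)
          = ∑ j ∈ range (p + 2),
              (1 - (-1 : ℤ) ^ (p + 1 - j)) * ((p + 1).choose j : ℤ) * vB j := by
        rw [wj]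
        refine Finset.sum_congr rfl fun j hj => ?_
        rcases Nat.lt_or_ge j (p + 1) with h | h
        · rw [ih j (by omega)]
        · have hj2 : j = p + 1 := by
            have := Finset.mem_range.mp hj; omega
          subst hj2
          rw [Nat.sub_self]
          norm_num
      have hswap := swap_lemma (fun i => 1 - (-1 : ℤ) ^ i) (fun i => (-1 : ℤ) ^ i) B (p + 1)
      have h2 : ∑ j ∈ range (p + 2),
          (1 - (-1 : ℤ) ^ (p + 1 - j)) * ((p + 1).choose j : ℤ) * vB j
          = ∑ m ∈ range (p + 2),
              (∑ i ∈ range (p + 1 - m + 1),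
                (1 - (-1 : ℤ) ^ (p + 1 - m - i)) * (-1 : ℤ) ^ i * ((p + 1 - m).choose i : ℤ))
                * ((p + 1).choose m : ℤ) * B m := by
        simp only [vB]; exact hswap
      have h3 : ∑ m ∈ range (p + 2),
          (∑ i ∈ range (p + 1 - m + 1),
            (1 - (-1 : ℤ) ^ (p + 1 - m - i)) * (-1 : ℤ) ^ i * ((p + 1 - m).choose i : ℤ))
            * ((p + 1).choose m : ℤ) * B m
          = -∑ m ∈ range (p + 1), (-2 : ℤ) ^ (p + 1 - m) * ((p + 1).choose m : ℤ) * B m := by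
        rw [Finset.sum_range_succ]
        have hlast : (∑ i ∈ range (p + 1 - (p + 1) + 1),
            (1 - (-1 : ℤ) ^ (p + 1 - (p + 1) - i)) * (-1 : ℤ) ^ i
              * ((p + 1 - (p + 1)).choose i : ℤ)) = 0 := by
          rw [Nat.sub_self]; simp
        rw [hlast, zero_mul, zero_mul, add_zero, ← Finset.sum_neg_distrib]
        refine Finset.sum_congr rfl fun m hm => ?_
        have hmk : m < p + 1 := Finset.mem_range.mp hm
        rw [inner1 (by omega : p + 1 - m ≠ 0)]
        ring
      have hK := key_K (p + 1)
      rw [h1, h2, h3]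
      linarith

/-- For every `k ≥ 1`, `A_k = ∑_{j=0}^{k-1} C(k,j)·B_j`. -/
theorem A_eq_sum_choose_B (k : ℕ) (hk : 1 ≤ k) :
    A k = ∑ j ∈ Finset.range k, (k.choose j : ℤ) * B j := by
  obtain ⟨p, rfl⟩ : ∃ p, k = p + 1 := ⟨k - 1, by omega⟩
  have hRB := RB p
  have h1 : wj B (p + 1)
      = (∑ j ∈ range (p + 2), ((p + 1).choose j : ℤ) * B j) - vB (p + 1) := by
    rw [wj, vB, ← Finset.sum_sub_distrib]
    exact Finset.sum_congr rfl fun j hj => by ring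
  have h2 : ∑ j ∈ range (p + 2), ((p + 1).choose j : ℤ) * B j
      = (∑ j ∈ range (p + 1), ((p + 1).choose j : ℤ) * B j) + B (p + 1) := by
    rw [Finset.sum_range_succ, Nat.choose_self]; push_cast; ring
  have h3 := A_eq_vB (p + 1)
  rw [h3]
  linarith
end

section
/- For every natural number n ≥ 1, ∑_{i=1}^{n} i^3·F_i = (n^3 + 6n - 12)·F_{n+2} + (-3n^2 + 9n - 19)·F_{n+3} + 50, as an identity of integers. -/
/-- **Erbacher–Fuchs.** For every `n ≥ 1`,
`∑_{i=1}^{n} i^3·F_i = (n^3+6n-12)·F_{n+2} + (-3n^2+9n-19)·F_{n+3} + 50`. -/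
theorem erbacher_fuchs (n : ℕ) (hn : 1 ≤ n) :
    ∑ i ∈ Finset.Icc 1 n, (i : ℤ) ^ 3 * (Nat.fib i : ℤ) =
      ((n : ℤ) ^ 3 + 6 * (n : ℤ) - 12) * (Nat.fib (n + 2) : ℤ)
        + (-3 * (n : ℤ) ^ 2 + 9 * (n : ℤ) - 19) * (Nat.fib (n + 3) : ℤ) + 50 := by
  induction n with
  | zero => omega
  | succ m ih =>
    rcases Nat.eq_or_lt_of_le hn with h | h
    · simp [← h]
      decide
    · have hm : 1 ≤ m := Nat.lt_succ_iff.mp h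
      rw [Finset.sum_Icc_succ_top (by omega), ih hm]
      have h1 : Nat.fib (m + 1 + 2) = Nat.fib (m + 3) := by ring_nf
      have h2 : (Nat.fib (m + 1 + 3) : ℤ) = Nat.fib (m + 3) + Nat.fib (m + 2) := by
        have := Nat.fib_add_two (n := m + 2)
        push_cast [show m + 1 + 3 = m + 2 + 2 from rfl, this]
        ring_nf
      have h3 : (Nat.fib (m + 1) : ℤ) = Nat.fib (m + 3) - Nat.fib (m + 2) := by
        have := Nat.fib_add_two (n := m + 1)
        push_cast [show m + 3 = m + 1 + 2 from rfl, this]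
        ring
      rw [h1, h2, h3]
      push_cast
      ring
end

section
/- For every natural number n ≥ 1, ∑_{i=1}^{n} i^3·F_i = (n^3 - 3n^2 + 15n - 31)·F_n + (n^3 - 6n^2 + 24n - 50)·F_{n+1} + 50, as an identity of integers. -/
/-- **Ledin's form of the Erbacher–Fuchs identity.** For every `n ≥ 1`,
`∑_{i=1}^{n} i^3·F_i = (n^3-3n^2+15n-31)·F_n + (n^3-6n^2+24n-50)·F_{n+1} + 50`. -/
theorem ledin_cubic_sum (n : ℕ) (hn : 1 ≤ n) :
    ∑ i ∈ Finset.Icc 1 n, (i : ℤ) ^ 3 * (Nat.fib i : ℤ) =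
      ((n : ℤ) ^ 3 - 3 * (n : ℤ) ^ 2 + 15 * (n : ℤ) - 31) * (Nat.fib n : ℤ)
        + ((n : ℤ) ^ 3 - 6 * (n : ℤ) ^ 2 + 24 * (n : ℤ) - 50) * (Nat.fib (n + 1) : ℤ)
        + 50 := by
  induction n with
  | zero => omega
  | succ m ih =>
    rcases Nat.eq_or_lt_of_le hn with h | h
    · simp [← h]
    · have hm : 1 ≤ m := by omega
      rw [Finset.sum_Icc_succ_top (by omega), ih hm, Nat.fib_add_two]
      push_cast
      ring
end

section
/- For every natural number n, P_n - n^3 = 2·∑_{i=1}^{n} ( i^3 - 3i^2 - 1 )·P_{n-i}, as an identity of integers, where P_n denotes the Pell numbers. -/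
/-- The Pell numbers: `P_0 = 0`, `P_1 = 1`, and `P_n = 2·P_{n-1} + P_{n-2}` for `n > 1`. -/
def pell : ℕ → ℤ
  | 0 => 0
  | 1 => 1
  | n + 2 => 2 * pell (n + 1) + pell n

/-- For every `n : ℕ`,
`P_n - n^3 = 2·∑_{i=1}^{n} (i^3 - 3i^2 - 1)·P_{n-i}`. -/
theorem pell_sub_cube_eq_sum (n : ℕ) :
    pell n - (n : ℤ) ^ 3 =
      2 * ∑ i ∈ Finset.Icc 1 n,
        ((i : ℤ) ^ 3 - 3 * (i : ℤ) ^ 2 - 1) * pell (n - i) := by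
  induction n using Nat.twoStepInduction with
  | zero => simp [pell]
  | one => simp [pell]
  | more n ih2 ih1 =>
    have h2 : ∑ i ∈ Finset.Icc 1 (n + 2),
          ((i : ℤ) ^ 3 - 3 * (i : ℤ) ^ 2 - 1) * pell (n + 2 - i)
        = (∑ i ∈ Finset.Icc 1 n, ((i : ℤ) ^ 3 - 3 * (i : ℤ) ^ 2 - 1) * pell (n + 2 - i))
          + (((n : ℤ) + 1) ^ 3 - 3 * ((n : ℤ) + 1) ^ 2 - 1) * pell 1
          + (((n : ℤ) + 2) ^ 3 - 3 * ((n : ℤ) + 2) ^ 2 - 1) * pell 0 := by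
      rw [show n + 2 = (n + 1) + 1 from rfl, Finset.sum_Icc_succ_top (by omega),
        Finset.sum_Icc_succ_top (by omega)]
      push_cast
      norm_num [pell]
    have h1 : ∑ i ∈ Finset.Icc 1 (n + 1),
          ((i : ℤ) ^ 3 - 3 * (i : ℤ) ^ 2 - 1) * pell (n + 1 - i)
        = (∑ i ∈ Finset.Icc 1 n, ((i : ℤ) ^ 3 - 3 * (i : ℤ) ^ 2 - 1) * pell (n + 1 - i))
          + (((n : ℤ) + 1) ^ 3 - 3 * ((n : ℤ) + 1) ^ 2 - 1) * pell 0 := by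
      rw [Finset.sum_Icc_succ_top (by omega)]
      push_cast
      norm_num
    have hsplit : ∑ i ∈ Finset.Icc 1 n,
          ((i : ℤ) ^ 3 - 3 * (i : ℤ) ^ 2 - 1) * pell (n + 2 - i)
        = 2 * (∑ i ∈ Finset.Icc 1 n, ((i : ℤ) ^ 3 - 3 * (i : ℤ) ^ 2 - 1) * pell (n + 1 - i))
          + ∑ i ∈ Finset.Icc 1 n, ((i : ℤ) ^ 3 - 3 * (i : ℤ) ^ 2 - 1) * pell (n - i) := by
      rw [Finset.mul_sum, ← Finset.sum_add_distrib]
      refine Finset.sum_congr rfl fun i hi => ?_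
      simp only [Finset.mem_Icc] at hi
      rw [show n + 2 - i = (n - i) + 2 by omega, show n + 1 - i = (n - i) + 1 by omega,
        show pell ((n - i) + 2) = 2 * pell ((n - i) + 1) + pell (n - i) from rfl]
      ring
    have hpell : pell (n + 2) = 2 * pell (n + 1) + pell n := rfl
    push_cast at ih1 ih2 ⊢
    rw [h2, hsplit, hpell]
    rw [h1] at ih1
    simp only [show pell 0 = 0 from rfl, show pell 1 = 1 from rfl] at *
    linarith [ih1, ih2]
end

section
/- Let a and b be integers and define the sequence R by R_0 = 0, R_1 = 1, and R_n = a·R_{n-1} + b·R_{n-2} for n > 1. Then for every natural number n, R_n - n^3 = ∑_{i=1}^{n} ( (a+b-1)·i^3 - 3(b+1)·i^2 + 3(b-1)·i - (b+1) )·R_{n-i}, as an identity of integers. -/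
/-- For the linear recurrence `R_0 = 0`, `R_1 = 1`,
`R_n = a·R_{n-1} + b·R_{n-2}` for `n > 1` (with `a b : ℤ`), and every `n : ℕ`,
`R_n - n^3 = ∑_{i=1}^{n} ((a+b-1)·i^3 - 3(b+1)·i^2 + 3(b-1)·i - (b+1))·R_{n-i}`. -/
theorem linear_recurrence_sub_cube_eq_sum (a b : ℤ) (R : ℕ → ℤ)
    (hR0 : R 0 = 0) (hR1 : R 1 = 1)
    (hRrec : ∀ n : ℕ, R (n + 2) = a * R (n + 1) + b * R n) (n : ℕ) :
    R n - (n : ℤ) ^ 3 =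
      ∑ i ∈ Finset.Icc 1 n,
        ((a + b - 1) * (i : ℤ) ^ 3 - 3 * (b + 1) * (i : ℤ) ^ 2
          + 3 * (b - 1) * (i : ℤ) - (b + 1)) * R (n - i) := by
  set f : ℕ → ℤ := fun i =>
    (a + b - 1) * (i : ℤ) ^ 3 - 3 * (b + 1) * (i : ℤ) ^ 2
      + 3 * (b - 1) * (i : ℤ) - (b + 1) with hf
  induction n using Nat.twoStepInduction with
  | zero => simp [hR0]
  | one => simp [hR0, hR1]
  | more n ih ih1 =>
    have h1 : (1:ℕ) ≤ n + 1 := le_add_self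
    have h2 : (1:ℕ) ≤ n + 2 := by omega
    have e2 : ∑ i ∈ Finset.Icc 1 (n+2), f i * R (n + 2 - i)
        = (∑ i ∈ Finset.Icc 1 n, f i * R (n + 2 - i)) + f (n+1) * R 1 + f (n+2) * R 0 := by
      rw [Finset.sum_Icc_succ_top h2, Finset.sum_Icc_succ_top h1]
      simp
    have e3 : ∑ i ∈ Finset.Icc 1 n, f i * R (n + 2 - i)
        = a * (∑ i ∈ Finset.Icc 1 n, f i * R (n + 1 - i))
          + b * (∑ i ∈ Finset.Icc 1 n, f i * R (n - i)) := by
      rw [Finset.mul_sum, Finset.mul_sum, ← Finset.sum_add_distrib]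
      refine Finset.sum_congr rfl fun i hi => ?_
      obtain ⟨hi1, hi2⟩ := Finset.mem_Icc.mp hi
      have h1 : n + 2 - i = (n - i) + 2 := by omega
      have h2 : n + 1 - i = (n - i) + 1 := by omega
      rw [h1, h2, hRrec]
      ring
    have e4 : ∑ i ∈ Finset.Icc 1 (n+1), f i * R (n + 1 - i)
        = (∑ i ∈ Finset.Icc 1 n, f i * R (n + 1 - i)) + f (n+1) * R 0 := by
      rw [Finset.sum_Icc_succ_top h1]
      simp
    rw [e4, hR0, mul_zero, add_zero] at ih1
    rw [e2, e3, hRrec, hR0, hR1, mul_zero, mul_one, add_zero]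
    simp only [hf] at ih ih1 ⊢
    rw [← ih1, ← ih]
    push_cast
    ring
end
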